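/- Let R, c, ε, δ, τ, θ > 0, set λ*² = Rθ/τ² + θ/ε and p_θ = R/τ, and let λ be a nonzero real number with c(δ/θ²)·λ²·(λ² − (λ*² + R²θ/(τ²c))) − (λ² − λ*²) = 0. Then the vector r = (−ε/θ, ελ/θ, (ε/(θp_θ))(λ² − λ*²), 1, (εθ/(δp_θ))·(λ² − λ*²)/λ) ∈ ℝ⁵ satisfies M₀(λ)·r = 0, where M₀(λ) is the 5×5 matrix with rows (−λ, −1, 0, 0, 0), (−Rθ/τ², −λ, R/τ, 1, 0), (0, Rθ/τ, −λc, 0, 1), (0, 1, 0, −ελ/θ, 0), (0, 0, 1, 0, −δλ/θ²). -/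

import Mathlib

/-- For any nonzero characteristic speed `λ` at equilibrium, the vector
`r = (−ε/θ, ελ/θ, (ε/(θp_θ))(λ² − λ*²), 1, (εθ/(δp_θ))(λ² − λ*²)/λ)` lies in
the kernel of the equilibrium characteristic matrix `M₀(λ)` of Ruggeri's
hyperbolic Navier–Stokes system with heat conduction. -/
theorem eigenvector_equilibrium_heat
    (R c ε δ τ θ : ℝ) (hR : 0 < R) (hc : 0 < c) (hε : 0 < ε) (hδ : 0 < δ)
    (hτ : 0 < τ) (hθ : 0 < θ) (lam : ℝ) (hlam : lam ≠ 0)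
    (hchar : c * (δ / θ ^ 2) * lam ^ 2
          * (lam ^ 2 - ((R * θ / τ ^ 2 + θ / ε) + R ^ 2 * θ / (τ ^ 2 * c)))
        - (lam ^ 2 - (R * θ / τ ^ 2 + θ / ε)) = 0) :
    (!![-lam, -1, 0, 0, 0;
        -(R * θ) / τ ^ 2, -lam, R / τ, 1, 0;
        0, R * θ / τ, -lam * c, 0, 1;
        0, 1, 0, -(ε * lam) / θ, 0;
        0, 0, 1, 0, -(δ * lam) / θ ^ 2]).mulVec
      ![-ε / θ, ε * lam / θ,
        (ε / (θ * (R / τ))) * (lam ^ 2 - (R * θ / τ ^ 2 + θ / ε)), 1,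
        (ε * θ / (δ * (R / τ))) * ((lam ^ 2 - (R * θ / τ ^ 2 + θ / ε)) / lam)] = 0 := by
  have key : (lam ^ 2 - (R * θ / τ ^ 2 + θ / ε)) / lam
      = c * (δ / θ ^ 2) * lam
        * (lam ^ 2 - ((R * θ / τ ^ 2 + θ / ε) + R ^ 2 * θ / (τ ^ 2 * c))) := by
    rw [div_eq_iff hlam]
    linear_combination -hchar
  have hchar' : c * δ * lam ^ 2 *
        (lam ^ 2 * (τ ^ 2 * ε * (τ ^ 2 * c)) -
          ((R * θ * ε + θ * τ ^ 2) * (τ ^ 2 * c) + R ^ 2 * θ * (τ ^ 2 * ε))) * (τ ^ 2 * ε) -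
      θ ^ 2 * (τ ^ 2 * ε * (τ ^ 2 * c)) * (lam ^ 2 * (τ ^ 2 * ε) - (R * θ * ε + θ * τ ^ 2)) = 0 := by
    field_simp at hchar
    linear_combination (c * τ ^ 4 * ε) * hchar
  funext i
  fin_cases i
  · simp [Matrix.mulVec, dotProduct, Fin.sum_univ_five]
    ring
  · simp [Matrix.mulVec, dotProduct, Fin.sum_univ_five]
    field_simp
    ring
  · simp [Matrix.mulVec, dotProduct, Fin.sum_univ_five]
    rw [key]
    field_simp
    ring
  · simp [Matrix.mulVec, dotProduct, Fin.sum_univ_five]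
    ring
  · simp [Matrix.mulVec, dotProduct, Fin.sum_univ_five]
    rw [key]
    field_simp
    field_simp at hchar
    linear_combination -hchar
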